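/- Anti-collapse along the free-energy gradient flow (conclusion of Theorem 2): let λ > 0, K ≥ 2, and let W(θ, P) = L_q(θ, P) + (λ/2) Σ_{j ≠ k} ‖p_j − p_k‖^{-2} with L_q(θ, P) ≥ 0 for all (θ, P). Let (θ(t), P(t)), t ≥ 0, be a differentiable solution of the gradient flow θ' = −η_θ ∇_θ W, P' = −η_P ∇_P W (η_θ, η_P > 0) whose initial prototypes p_1(0), …, p_K(0) are pairwise distinct, and set W₀ = W(θ(0), P(0)). Then for all t ≥ 0 in the interval of existence, the prototypes remain pairwise distinct with separation min_{j ≠ k} ‖p_j(t) − p_k(t)‖² ≥ λ / W₀; in particular the trajectory never reaches a prototype-collapse configuration. -/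

import Mathlib

set_option maxHeartbeats 40000000 in
set_option synthInstance.maxHeartbeats 4000000 in
/-- Anti-collapse along the free-energy gradient flow: let
`λ > 0`, `K ≥ 2`, and `W(θ, P) = L_q(θ, P) + (λ/2) ∑_{j ≠ k} ‖p_j − p_k‖⁻²`
with `L_q ≥ 0`. Let `(θ t, P t)`, `t ≥ 0`, solve the two-rate gradient flow
`θ' = −ηθ ∇_θ W`, `P' = −ηP ∇_P W` (the Fréchet derivative of `W` at
`(θ t, P t)` being the pairing with the partial gradients `(gθ t, gP t)`),
with pairwise distinct initial prototypes, and set `W₀ = W (θ 0, P 0)`.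
Then for all `t ≥ 0` the prototypes remain pairwise distinct with separation
`‖p_j(t) − p_k(t)‖² ≥ λ / W₀`: the trajectory never reaches a
prototype-collapse configuration. -/
theorem ddcl_free_energy_anti_collapse
    (a m K : ℕ) (hK : 2 ≤ K) (lam : ℝ) (hlam : 0 < lam)
    (Lq : EuclideanSpace ℝ (Fin a) × PiLp 2 (fun _ : Fin K => EuclideanSpace ℝ (Fin m)) → ℝ)
    (hLq : ∀ u, 0 ≤ Lq u)
    (W : EuclideanSpace ℝ (Fin a) × PiLp 2 (fun _ : Fin K => EuclideanSpace ℝ (Fin m)) → ℝ)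
    (hWdef : ∀ u, W u = Lq u + (lam / 2) *
      ∑ jk ∈ Finset.univ.filter (fun jk : Fin K × Fin K => jk.1 ≠ jk.2),
        (‖u.2 jk.1 - u.2 jk.2‖ ^ 2)⁻¹)
    (ηθ ηP : ℝ) (hηθ : 0 < ηθ) (hηP : 0 < ηP)
    (θ : ℝ → EuclideanSpace ℝ (Fin a))
    (P : ℝ → PiLp 2 (fun _ : Fin K => EuclideanSpace ℝ (Fin m)))
    (gθ : ℝ → EuclideanSpace ℝ (Fin a))
    (gP : ℝ → PiLp 2 (fun _ : Fin K => EuclideanSpace ℝ (Fin m)))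
    (hW : ∀ t, 0 ≤ t → HasFDerivAt W
      ((innerSL ℝ (gθ t)).comp
          (ContinuousLinearMap.fst ℝ (EuclideanSpace ℝ (Fin a))
            (PiLp 2 (fun _ : Fin K => EuclideanSpace ℝ (Fin m))))
        + (innerSL ℝ (gP t)).comp
          (ContinuousLinearMap.snd ℝ (EuclideanSpace ℝ (Fin a))
            (PiLp 2 (fun _ : Fin K => EuclideanSpace ℝ (Fin m)))))
      (θ t, P t))
    (hθ : ∀ t, 0 ≤ t → HasDerivAt θ (-ηθ • gθ t) t)
    (hP : ∀ t, 0 ≤ t → HasDerivAt P (-ηP • gP t) t)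
    (hinit : ∀ j k : Fin K, j ≠ k → P 0 j ≠ P 0 k) :
    ∀ t, 0 ≤ t → ∀ j k : Fin K, j ≠ k →
      P t j ≠ P t k ∧ lam / W (θ 0, P 0) ≤ ‖P t j - P t k‖ ^ 2 := by
  -- notation
  set W₀ := W (θ 0, P 0) with hW0
  set f : ℝ → ℝ := fun t => W (θ t, P t) with hf
  -- derivative of f along the flow
  have hfderiv : ∀ t, 0 ≤ t →
      HasDerivAt f (-(ηθ * ‖gθ t‖ ^ 2 + ηP * ‖gP t‖ ^ 2)) t := by
    intro t ht
    have h : HasDerivAt (fun s => W (θ s, P s)) _ t :=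
      (hW t ht).comp_hasDerivAt t ((hθ t ht).prodMk (hP t ht))
    convert h using 1
    simp only [ContinuousLinearMap.add_apply, ContinuousLinearMap.comp_apply,
      ContinuousLinearMap.coe_fst', ContinuousLinearMap.coe_snd', innerSL_apply_apply,
      real_inner_smul_right, real_inner_self_eq_norm_sq]
    ring
  -- f is antitone on [0, ∞)
  have hanti : AntitoneOn f (Set.Ici (0 : ℝ)) := by
    apply antitoneOn_of_deriv_nonpos (convex_Ici 0)
    · intro t ht
      exact ((hfderiv t ht).continuousAt).continuousWithinAt
    · intro t ht
      rw [interior_Ici] at ht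
      exact (hfderiv t (le_of_lt ht)).differentiableAt.differentiableWithinAt
    · intro t ht
      rw [interior_Ici] at ht
      rw [(hfderiv t ht.le).deriv]
      have h1 : 0 ≤ ηθ * ‖gθ t‖ ^ 2 := mul_nonneg hηθ.le (sq_nonneg _)
      have h2 : 0 ≤ ηP * ‖gP t‖ ^ 2 := mul_nonneg hηP.le (sq_nonneg _)
      linarith
  -- pairwise lower bound on W
  have hWlb : ∀ t (j k : Fin K), j ≠ k →
      lam * (‖P t j - P t k‖ ^ 2)⁻¹ ≤ f t := by
    intro t j k hjk
    have hsub : ({(j, k), (k, j)} : Finset (Fin K × Fin K)) ⊆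
        Finset.univ.filter (fun jk : Fin K × Fin K => jk.1 ≠ jk.2) := by
      intro x hx
      simp only [Finset.mem_insert, Finset.mem_singleton] at hx
      rcases hx with rfl | rfl <;> simp [hjk, hjk.symm]
    have hnonneg : ∀ x ∈ Finset.univ.filter (fun jk : Fin K × Fin K => jk.1 ≠ jk.2),
        x ∉ ({(j, k), (k, j)} : Finset (Fin K × Fin K)) →
        (0 : ℝ) ≤ (‖P t x.1 - P t x.2‖ ^ 2)⁻¹ := by
      intro x _ _; positivity
    have hsum := Finset.sum_le_sum_of_subset_of_nonneg hsub hnonneg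
    have hne : ((j, k) : Fin K × Fin K) ≠ (k, j) := by
      intro h; exact hjk (by simpa using congrArg Prod.fst h)
    have hpair : ∑ jk ∈ ({(j, k), (k, j)} : Finset (Fin K × Fin K)),
        (‖P t jk.1 - P t jk.2‖ ^ 2)⁻¹ = 2 * (‖P t j - P t k‖ ^ 2)⁻¹ := by
      rw [Finset.sum_insert (by simpa using hne), Finset.sum_singleton,
        norm_sub_rev (P t k)]
      ring
    have hLq' := hLq (θ t, P t)
    have := hWdef (θ t, P t)
    simp only [hf]
    rw [this]
    rw [hpair] at hsum
    nlinarith [hsum]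
  -- W₀ is positive
  have hW0pos : 0 < W₀ := by
    have hj : (⟨0, by omega⟩ : Fin K) ≠ ⟨1, by omega⟩ := by
      intro h; simpa using congrArg Fin.val h
    have h1 := hWlb 0 _ _ hj
    have h2 : P 0 (⟨0, by omega⟩ : Fin K) ≠ P 0 ⟨1, by omega⟩ := hinit _ _ hj
    have h3 : 0 < ‖P 0 (⟨0, by omega⟩ : Fin K) - P 0 ⟨1, by omega⟩‖ ^ 2 :=
      pow_pos (norm_pos_iff.2 (sub_ne_zero_of_ne h2)) 2
    have h4 : 0 < lam * (‖P 0 (⟨0, by omega⟩ : Fin K) - P 0 ⟨1, by omega⟩‖ ^ 2)⁻¹ :=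
      mul_pos hlam (inv_pos.2 h3)
    exact lt_of_lt_of_le h4 h1
  -- key: if distinct at time t ≥ 0, then separation ≥ lam / W₀
  have hkey : ∀ t, 0 ≤ t → ∀ j k : Fin K, j ≠ k → P t j ≠ P t k →
      lam / W₀ ≤ ‖P t j - P t k‖ ^ 2 := by
    intro t ht j k hjk hne
    have hg : 0 < ‖P t j - P t k‖ ^ 2 :=
      pow_pos (norm_pos_iff.2 (sub_ne_zero_of_ne hne)) 2
    have h1 := hWlb t j k hjk
    have h2 : f t ≤ W₀ := hanti (Set.self_mem_Ici) ht ht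
    have h3 : lam * (‖P t j - P t k‖ ^ 2)⁻¹ ≤ W₀ := h1.trans h2
    rw [div_le_iff₀ hW0pos]
    have h4 : lam * (‖P t j - P t k‖ ^ 2)⁻¹ * ‖P t j - P t k‖ ^ 2 ≤
        W₀ * ‖P t j - P t k‖ ^ 2 := mul_le_mul_of_nonneg_right h3 hg.le
    rw [mul_assoc, inv_mul_cancel₀ hg.ne', mul_one] at h4
    linarith
  intro t ht j k hjk
  -- the connectedness argument, for the fixed pair (j, k)
  set c := lam / W₀ with hc
  have hcpos : 0 < c := div_pos hlam hW0pos
  set g : ℝ → ℝ := fun s => ‖P s j - P s k‖ ^ 2 with hg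
  have hg0 : c ≤ g 0 := hkey 0 le_rfl j k hjk (hinit j k hjk)
  set u : Set ℝ := {s | s < 0 ∨ c ≤ g s} with hu
  have hu_mem : ∀ s, 0 ≤ s → c ≤ g s → u ∈ nhds s := by
    intro s hs hgs
    have hne : P s j - P s k ≠ 0 := by
      intro h
      rw [hg] at hgs
      simp only [h, norm_zero] at hgs
      nlinarith
    have hcont : ContinuousAt (fun r => P r j - P r k) s := by
      have hPc : ContinuousAt P s := (hP s hs).continuousAt
      exact ((PiLp.continuous_apply 2 _ j).continuousAt.comp hPc).sub
        ((PiLp.continuous_apply 2 _ k).continuousAt.comp hPc)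
    have hopen : {x : EuclideanSpace ℝ (Fin m) | x ≠ 0} ∈
        nhds (P s j - P s k) := by
      exact IsOpen.mem_nhds isOpen_ne hne
    have hpre := hcont.preimage_mem_nhds hopen
    apply Filter.mem_of_superset hpre
    intro r hr
    rcases lt_or_ge r 0 with h | h
    · exact Or.inl h
    · exact Or.inr (hkey r h j k hjk (fun heq => hr (by simp [heq])))
  have huopen : IsOpen u := by
    rw [isOpen_iff_mem_nhds]
    intro s hs
    rcases hs with hs | hs
    · exact Filter.mem_of_superset (Iio_mem_nhds hs) (fun r hr => Or.inl hr)
    · rcases lt_or_ge s 0 with h | h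
      · exact Filter.mem_of_superset (Iio_mem_nhds h) (fun r hr => Or.inl hr)
      · exact hu_mem s h hs
  have huclosed : IsClosed u := by
    rw [← isOpen_compl_iff, isOpen_iff_mem_nhds]
    intro s hs
    simp only [hu, Set.mem_compl_iff, Set.mem_setOf_eq, not_or, not_lt] at hs
    obtain ⟨hs0, hsg⟩ := hs
    have hspos : 0 < s := by
      rcases hs0.lt_or_eq with h | h
      · exact h
      · exfalso; rw [h] at hg0; exact hsg hg0
    have hgc : ContinuousAt g s := by
      have hPc : ContinuousAt P s := (hP s hs0).continuousAt
      have : ContinuousAt (fun r => P r j - P r k) s :=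
        ((PiLp.continuous_apply 2 _ j).continuousAt.comp hPc).sub
          ((PiLp.continuous_apply 2 _ k).continuousAt.comp hPc)
      exact (this.norm.pow 2)
    have h1 : {r | g r < c} ∈ nhds s := hgc.preimage_mem_nhds (Iio_mem_nhds (by linarith))
    have h2 : Set.Ioi (0 : ℝ) ∈ nhds s := Ioi_mem_nhds hspos
    apply Filter.mem_of_superset (Filter.inter_mem h2 h1)
    intro r ⟨hr0, hrg⟩
    simp only [hu, Set.mem_compl_iff, Set.mem_setOf_eq, not_or, not_lt, not_le]
    exact ⟨le_of_lt hr0, hrg⟩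
  have huniv : u = Set.univ :=
    IsClopen.eq_univ ⟨huclosed, huopen⟩ ⟨0, Or.inr hg0⟩
  have htu : t ∈ u := huniv ▸ Set.mem_univ t
  have hgt : c ≤ g t := by
    rcases htu with h | h
    · linarith
    · exact h
  constructor
  · intro heq
    have : g t = 0 := by simp [hg, heq]
    rw [this] at hgt; linarith
  · exact hgt
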